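/- Fix an integer d ≥ 1 and a partition λ = (λ₁,…,λ_{d−1}) with at most d−1 parts. For each k with dk − |λ| ≥ λ₁, let λ'(k) = (dk − |λ|, λ₁, …, λ_{d−1}), a partition of dk with at most d parts, and let m(k) = [Δ(x) · h_d(all monomials of degree k in x₁,…,x_d)]_{(λ'(k)_j + d − j)_{j=1}^{d}}, the multiplicity of S^{λ'(k)} in S^d(S^k). Then m(k) is eventually constant: there exist K and c such that m(k) = c for all k ≥ K. -/

import Mathlib

open MvPolynomial Finset

noncomputable section

/-- Complete homogeneous symmetric polynomial `h_d` evaluated at the family `y i`, `i ∈ s`: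
the sum, over all multisets of size `d` with elements in `s`, of the corresponding products. -/
def hSum {ι : Type*} [DecidableEq ι] {R : Type*} [CommRing R]
    (d : ℕ) (s : Finset ι) (y : ι → R) : R :=
  ∑ t ∈ s.sym d, ((t : Multiset ι).map y).prod

/-- Elementary symmetric polynomial `e_d` evaluated at the family `y i`, `i ∈ s`. -/
def eSum {ι : Type*} [DecidableEq ι] {R : Type*} [CommRing R]
    (d : ℕ) (s : Finset ι) (y : ι → R) : R :=
  ∑ t ∈ s.powersetCard d, ∏ i ∈ t, y i

/-- The monomial `x^c` in `m` variables. -/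
def monom (m : ℕ) (c : Fin m → ℕ) : MvPolynomial (Fin m) ℤ := ∏ j, X j ^ c j

/-- `h_d` applied to the list of all monomials of degree `k` in `m` variables:
the character of `S^d(S^k W)` for `dim W = m`. -/
def charS (d k m : ℕ) : MvPolynomial (Fin m) ℤ :=
  hSum d (Finset.Nat.antidiagonalTuple m k) (monom m)

/-- `e_d` applied to the list of all monomials of degree `k` in `m` variables:
the character of `Λ^d(S^k W)` for `dim W = m`. -/
def charW (d k m : ℕ) : MvPolynomial (Fin m) ℤ :=
  eSum d (Finset.Nat.antidiagonalTuple m k) (monom m)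

/-- `h_k(x_1,…,x_m)`. -/
def hpoly (m k : ℕ) : MvPolynomial (Fin m) ℤ :=
  ∑ c ∈ Finset.Nat.antidiagonalTuple m k, monom m c

/-- `h_k(x_1^r,…,x_m^r)`. -/
def hkPow (m k r : ℕ) : MvPolynomial (Fin m) ℤ :=
  ∑ c ∈ Finset.Nat.antidiagonalTuple m k, ∏ j, X j ^ (r * c j)

/-- The Vandermonde product `Δ(x) = ∏_{i<j} (x_i - x_j)`. -/
def vand (m : ℕ) : MvPolynomial (Fin m) ℤ :=
  ∏ p ∈ (Finset.univ : Finset (Fin m × Fin m)).filter (fun p => p.1 < p.2),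
    (X p.1 - X p.2)

/-- The coefficient of the monomial with exponent vector `e`. -/
def coeffOf {m : ℕ} (e : Fin m → ℕ) (P : MvPolynomial (Fin m) ℤ) : ℤ :=
  MvPolynomial.coeff (Finsupp.equivFunOnFinite.symm e) P

/-- `N_α(k; μ)`: the number of `(α,μ)`-matrices, i.e. of nonnegative integral `a × m`
matrices all of whose row sums are `k` and whose `α`-weighted column sums are `μ`. -/
def Nmat {a m : ℕ} (α : Fin a → ℕ) (k : ℕ) (μ : Fin m → ℤ) : ℕ :=
  Set.ncard {M : Fin a → Fin m → ℕ |
    (∀ i, ∑ j, M i j = k) ∧ ∀ j, ∑ i, (α i : ℤ) * (M i j : ℤ) = μ j}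

/-- `N_α(k; μ)` for `α` given as a list. -/
def NmatL (αs : List ℕ) {m : ℕ} (k : ℕ) (μ : Fin m → ℤ) : ℕ :=
  Nmat (fun i : Fin αs.length => αs.get i) k μ

/-- `D_ρ`: the number of permutations in `S_d` of cycle type `ρ` (a partition of `d`);
Mathlib's `cycleType` records only the cycles of length at least 2. -/
def Dnum (d : ℕ) (ρ : Nat.Partition d) : ℕ :=
  ((Finset.univ : Finset (Equiv.Perm (Fin d))).filter
    (fun σ => σ.cycleType = ρ.parts.filter (fun r => 2 ≤ r))).card

/-! ### Auxiliary definitions and lemmas for the proof -/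

/-- The column-sum exponent vector of a multiset of exponent vectors. -/
def csum {m D : ℕ} (t : Sym (Fin m → ℕ) D) : Fin m →₀ ℕ :=
  Finsupp.equivFunOnFinite.symm (fun j => ((t : Multiset (Fin m → ℕ)).map (fun c => c j)).sum)

lemma csum_apply {m D : ℕ} (t : Sym (Fin m → ℕ) D) (j : Fin m) :
    csum t j = ((t : Multiset (Fin m → ℕ)).map (fun c => c j)).sum := rfl

lemma monom_eq (m : ℕ) (c : Fin m → ℕ) :
    monom m c = monomial (Finsupp.equivFunOnFinite.symm c) 1 := by
  rw [← prod_X_pow_eq_monomial]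
  unfold monom
  exact (Finset.prod_subset (Finset.subset_univ _)
    (fun j _ hj => by
      have h0 : (Finsupp.equivFunOnFinite.symm c) j = 0 := Finsupp.notMem_support_iff.mp hj
      show X j ^ (Finsupp.equivFunOnFinite.symm c) j = 1
      rw [h0, pow_zero])).symm

lemma prod_map_monom (m : ℕ) (T : Multiset (Fin m → ℕ)) :
    (T.map (monom m)).prod =
      monomial (Finsupp.equivFunOnFinite.symm (fun j => (T.map (fun c => c j)).sum)) 1 := by
  induction T using Multiset.induction_on with
  | empty =>
      simp only [Multiset.map_zero, Multiset.prod_zero, Multiset.sum_zero]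
      have h : (Finsupp.equivFunOnFinite.symm (fun _ : Fin m => (0:ℕ))) = 0 := by ext j; rfl
      rw [h, ← C_1, C_apply]
  | cons c T ih =>
      rw [Multiset.map_cons, Multiset.prod_cons, ih, monom_eq, monomial_mul, mul_one]
      have h2 : (Finsupp.equivFunOnFinite.symm c +
            Finsupp.equivFunOnFinite.symm fun j => (Multiset.map (fun c => c j) T).sum)
          = Finsupp.equivFunOnFinite.symm
              (fun j => (Multiset.map (fun c => c j) (c ::ₘ T)).sum) := by
        ext j
        simp only [Finsupp.add_apply, Multiset.map_cons, Multiset.sum_cons]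
        rfl
      rw [h2]

lemma coeff_charS (D k m : ℕ) (μ : Fin m →₀ ℕ) :
    coeff μ (charS D k m) =
      ((((Finset.Nat.antidiagonalTuple m k).sym D).filter (fun t => csum t = μ)).card : ℤ) := by
  unfold charS hSum
  rw [coeff_sum, ← Finset.sum_boole]
  refine Finset.sum_congr rfl (fun t _ => ?_)
  rw [prod_map_monom, coeff_monomial]
  rfl

/-- Shift: add 1 to the first coordinate. -/
def shf {m : ℕ} (c : Fin (m+1) → ℕ) : Fin (m+1) → ℕ := fun j => c j + if j = 0 then 1 else 0

/-- Unshift: subtract 1 from the first coordinate. -/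
def ushf {m : ℕ} (c : Fin (m+1) → ℕ) : Fin (m+1) → ℕ := fun j => c j - if j = 0 then 1 else 0

lemma csum_map_shf {m D : ℕ} (t : Sym (Fin (m+1) → ℕ) D) :
    csum (t.map shf) = csum t + Finsupp.single 0 D := by
  ext j
  rw [Finsupp.add_apply, csum_apply, csum_apply, Sym.coe_map, Multiset.map_map]
  have h : ((fun c : Fin (m+1) → ℕ => c j) ∘ shf) = fun c => c j + if j = 0 then 1 else 0 := rfl
  rw [h, Multiset.sum_map_add, Multiset.map_const', Multiset.sum_replicate,
    show Multiset.card (t : Multiset (Fin (m+1) → ℕ)) = D from t.2, Finsupp.single_apply]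
  rcases eq_or_ne j 0 with h | h <;> simp [h, eq_comm]

lemma sum_shf {m : ℕ} (c : Fin (m+1) → ℕ) : (∑ j, shf c j) = (∑ j, c j) + 1 := by
  unfold shf
  rw [Finset.sum_add_distrib]
  simp

lemma pos_of_mem {D m k : ℕ} (μ : Fin (m+1) →₀ ℕ)
    (hk : ∑ j ∈ (univ : Finset (Fin (m+1))).erase 0, μ j ≤ k)
    (t : Sym (Fin (m+1) → ℕ) D)
    (ht : t ∈ ((Finset.Nat.antidiagonalTuple (m+1) (k+1)).sym D).filter
      (fun t => csum t = μ + Finsupp.single 0 D))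
    {c : Fin (m+1) → ℕ} (hc : c ∈ t) : 0 < c 0 := by
  rw [mem_filter] at ht
  have h1 : ∑ j, c j = k + 1 :=
    Finset.Nat.mem_antidiagonalTuple.mp (Finset.mem_sym_iff.mp ht.1 c hc)
  have h2 : ∀ j, c j ≤ csum t j := fun j =>
    Multiset.le_sum_of_mem (Multiset.mem_map_of_mem (fun c : Fin (m+1) → ℕ => c j) (Sym.mem_coe.mpr hc))
  have h3 : ∑ j ∈ (univ : Finset (Fin (m+1))).erase 0, c j ≤
      ∑ j ∈ (univ : Finset (Fin (m+1))).erase 0, μ j := by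
    refine Finset.sum_le_sum fun j hj => ?_
    have h := h2 j
    rw [ht.2, Finsupp.add_apply, Finsupp.single_apply,
      if_neg (fun h0 => Finset.ne_of_mem_erase hj h0.symm)] at h
    omega
  have h4 : c 0 + ∑ j ∈ (univ : Finset (Fin (m+1))).erase 0, c j = k + 1 := by
    rw [Finset.add_sum_erase _ _ (mem_univ 0)]; exact h1
  omega

lemma coeff_charS_succ_card (D m k : ℕ) (μ : Fin (m+1) →₀ ℕ)
    (hk : ∑ j ∈ (univ : Finset (Fin (m+1))).erase 0, μ j ≤ k) :
    (((Finset.Nat.antidiagonalTuple (m+1) k).sym D).filter (fun t => csum t = μ)).card =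
    (((Finset.Nat.antidiagonalTuple (m+1) (k+1)).sym D).filter
      (fun t => csum t = μ + Finsupp.single 0 D)).card := by
  refine Finset.card_bij' (fun t _ => t.map shf) (fun t _ => t.map ushf) ?_ ?_ ?_ ?_
  · intro t ht
    rw [mem_filter] at ht ⊢
    refine ⟨Finset.mem_sym_iff.mpr fun c' hc' => ?_, by rw [csum_map_shf, ht.2]⟩
    obtain ⟨c, hc, rfl⟩ := Sym.mem_map.mp hc'
    have hmem := Finset.Nat.mem_antidiagonalTuple.mp (Finset.mem_sym_iff.mp ht.1 c hc)
    rw [Finset.Nat.mem_antidiagonalTuple, sum_shf, hmem]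
  · intro t ht
    have hpos : ∀ c ∈ t, 0 < c 0 := fun c hc => pos_of_mem μ hk t ht hc
    rw [mem_filter] at ht ⊢
    constructor
    · refine Finset.mem_sym_iff.mpr fun c' hc' => ?_
      obtain ⟨c, hc, rfl⟩ := Sym.mem_map.mp hc'
      have h1 : ∑ j, c j = k + 1 :=
        Finset.Nat.mem_antidiagonalTuple.mp (Finset.mem_sym_iff.mp ht.1 c hc)
      rw [Finset.Nat.mem_antidiagonalTuple]
      have h4 : c 0 + ∑ j ∈ (univ : Finset (Fin (m+1))).erase 0, c j = k + 1 := by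
        rw [Finset.add_sum_erase _ _ (mem_univ 0)]; exact h1
      have h5 : ∑ j, ushf c j = ushf c 0 + ∑ j ∈ (univ : Finset (Fin (m+1))).erase 0, ushf c j :=
        (Finset.add_sum_erase _ _ (mem_univ 0)).symm
      have h6 : ∑ j ∈ (univ : Finset (Fin (m+1))).erase 0, ushf c j =
          ∑ j ∈ (univ : Finset (Fin (m+1))).erase 0, c j :=
        Finset.sum_congr rfl fun j hj => by
          unfold ushf; rw [if_neg (Finset.ne_of_mem_erase hj)]; simp
      have h7 : ushf c 0 = c 0 - 1 := by unfold ushf; simp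
      have := hpos c hc
      omega
    · ext j
      rw [csum_apply, Sym.coe_map, Multiset.map_map]
      rcases eq_or_ne j 0 with rfl | hj
      · have hco : ((fun c : Fin (m+1) → ℕ => c 0) ∘ ushf) = fun c => c 0 - 1 := by
          funext c; unfold ushf; simp
        rw [hco,
          Multiset.sum_map_tsub _ (fun c hc => hpos c (Sym.mem_coe.mp hc)),
          Multiset.map_const', Multiset.sum_replicate,
          show Multiset.card (t : Multiset (Fin (m+1) → ℕ)) = D from t.2]
        have h8 : (Multiset.map (fun c => c 0) (t : Multiset (Fin (m+1) → ℕ))).sum = μ 0 + D := by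
          rw [← csum_apply, ht.2]; simp
        rw [h8]
        simp
      · have hco : ((fun c : Fin (m+1) → ℕ => c j) ∘ ushf) = fun c => c j := by
          funext c; simp [ushf, hj]
        rw [hco, ← csum_apply, ht.2, Finsupp.add_apply, Finsupp.single_apply,
          if_neg (fun h0 => hj h0.symm)]
        simp
  · intro t _
    show Sym.map ushf (Sym.map shf t) = t
    rw [Sym.map_map]
    have h : (ushf ∘ shf : (Fin (m+1) → ℕ) → (Fin (m+1) → ℕ)) = id := by
      funext c j; unfold ushf shf; simp
    rw [h, Sym.map_id]
  · intro t ht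
    have hpos : ∀ c ∈ t, 0 < c 0 := fun c hc => pos_of_mem μ hk t ht hc
    show Sym.map shf (Sym.map ushf t) = t
    apply Sym.coe_injective
    rw [Sym.coe_map, Sym.coe_map, Multiset.map_map]
    refine (Multiset.map_congr rfl fun c hc => ?_).trans (Multiset.map_id _)
    have h := hpos c (Sym.mem_coe.mp hc)
    funext j
    show shf (ushf c) j = c j
    unfold shf ushf
    rcases eq_or_ne j 0 with rfl | hjj
    · simp; omega
    · simp [hjj]

lemma coeff_charS_succ (D m k : ℕ) (μ : Fin (m+1) →₀ ℕ)
    (hk : ∑ j ∈ (univ : Finset (Fin (m+1))).erase 0, μ j ≤ k) :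
    coeff (μ + Finsupp.single 0 D) (charS D (k+1) (m+1)) = coeff μ (charS D k (m+1)) := by
  rw [coeff_charS, coeff_charS, ← coeff_charS_succ_card D m k μ hk]

/-- The exponent vector `λ'(k) + δ`. -/
def Evec (lam : ℕ → ℕ) (m k : ℕ) : Fin (m+1) →₀ ℕ :=
  Finsupp.equivFunOnFinite.symm (fun j : Fin (m+1) =>
    (if (j : ℕ) = 0 then (m+1) * k - ∑ i ∈ Finset.range m, lam i else lam ((j : ℕ) - 1))
      + (m - (j : ℕ)))

lemma Evec_apply (lam : ℕ → ℕ) (m k : ℕ) (j : Fin (m+1)) :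
    Evec lam m k j =
      (if (j : ℕ) = 0 then (m+1) * k - ∑ i ∈ Finset.range m, lam i else lam ((j : ℕ) - 1))
        + (m - (j : ℕ)) := rfl

/-- The contribution of one monomial of the Vandermonde to the target coefficient. -/
def termF (lam : ℕ → ℕ) (m : ℕ) (a : Fin (m+1) →₀ ℕ) (k : ℕ) : ℤ :=
  if a ≤ Evec lam m k then
    coeff a (vand (m+1)) * coeff (Evec lam m k - a) (charS (m+1) k (m+1)) else 0

lemma coeff_vand_mul (lam : ℕ → ℕ) (m k : ℕ) :
    coeff (Evec lam m k) (vand (m+1) * charS (m+1) k (m+1)) =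
      ∑ a ∈ (vand (m+1)).support, termF lam m a k := by
  conv_lhs => rw [as_sum (vand (m+1))]
  rw [Finset.sum_mul, coeff_sum]
  exact Finset.sum_congr rfl fun a _ => by
    rw [coeff_monomial_mul']; rfl

lemma termF_stab (lam : ℕ → ℕ) (m : ℕ) (a : Fin (m+1) →₀ ℕ) :
    ∃ Ka : ℕ, ∀ k, Ka ≤ k → termF lam m a (k+1) = termF lam m a k := by
  by_cases hA : ∀ j : Fin (m+1), (j : ℕ) ≠ 0 → a j ≤ lam ((j : ℕ) - 1) + (m - (j : ℕ))
  · set S0 := ∑ i ∈ Finset.range m, lam i with hS0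
    set T := ∑ j ∈ (univ : Finset (Fin (m+1))).erase 0,
      (lam ((j : ℕ) - 1) + (m - (j : ℕ))) with hT
    refine ⟨S0 + a 0 + T, fun k hk => ?_⟩
    have hmul : k ≤ (m+1)*k := Nat.le_mul_of_pos_left k (Nat.succ_pos m)
    have hmul2 : (m+1)*(k+1) = (m+1)*k + (m+1) := by ring
    have hle : ∀ k', S0 + a 0 ≤ (m+1)*k' → a ≤ Evec lam m k' := by
      intro k' hk'
      refine Finsupp.le_def.mpr fun j => ?_
      rcases eq_or_ne ((j : ℕ)) 0 with h0 | h0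
      · have hj : j = 0 := by
          ext
          simpa using h0
        subst hj
        rw [Evec_apply]
        simp
        omega
      · rw [Evec_apply, if_neg h0]
        have h1 := hA j h0
        omega
    have h1 : a ≤ Evec lam m k := hle k (by omega)
    have h2 : a ≤ Evec lam m (k+1) := hle (k+1) (by omega)
    unfold termF
    rw [if_pos h1, if_pos h2]
    have h3 : Evec lam m (k+1) - a = (Evec lam m k - a) + Finsupp.single 0 (m+1) := by
      ext j
      rw [Finsupp.add_apply, Finsupp.tsub_apply, Finsupp.tsub_apply, Finsupp.single_apply]
      rcases eq_or_ne ((j : ℕ)) 0 with h0 | h0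
      · have hj : j = 0 := by
          ext
          simpa using h0
        subst hj
        have ha0 := Finsupp.le_def.mp h1 0
        rw [Evec_apply] at ha0
        rw [Evec_apply, Evec_apply]
        simp at ha0 ⊢
        omega
      · have hne : ¬ ((0 : Fin (m+1)) = j) := fun h => h0 (by rw [← h]; rfl)
        rw [if_neg hne, Evec_apply, Evec_apply, if_neg h0, if_neg h0]
        omega
    rw [h3]
    have hb : ∑ j ∈ (univ : Finset (Fin (m+1))).erase 0, (Evec lam m k - a) j ≤ k := by
      have hb1 : ∑ j ∈ (univ : Finset (Fin (m+1))).erase 0, (Evec lam m k - a) j ≤ T := by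
        rw [hT]
        refine Finset.sum_le_sum fun j hj => ?_
        have h0 : (j : ℕ) ≠ 0 := fun h =>
          Finset.ne_of_mem_erase hj (by ext; simpa using h)
        rw [Finsupp.tsub_apply, Evec_apply, if_neg h0]
        omega
      omega
    rw [coeff_charS_succ (m+1) m k _ hb]
  · push_neg at hA
    obtain ⟨j, hj0, hja⟩ := hA
    have hle : ∀ k', ¬ a ≤ Evec lam m k' := fun k' h => by
      have h2 := Finsupp.le_def.mp h j
      rw [Evec_apply, if_neg hj0] at h2
      omega
    exact ⟨0, fun k _ => by unfold termF; rw [if_neg (hle _), if_neg (hle _)]⟩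

/-- Stability: for fixed `d` and a partition `λ` with at most `d−1` parts, the
multiplicity of `S^{λ'(k)}` in `S^d(S^k)`, where `λ'(k)` is obtained from `λ` by adding a
new first row filling up to weight `dk`, is eventually constant in `k`. -/
theorem stable_multiplicity (d : ℕ) (hd : 1 ≤ d)
    (lam : ℕ → ℕ) (hanti : ∀ i j : ℕ, i ≤ j → lam j ≤ lam i)
    (hsupp : ∀ i : ℕ, d - 1 ≤ i → lam i = 0) :
    ∃ K : ℕ, ∃ c : ℤ, ∀ k : ℕ, K ≤ k →
      coeffOf (fun j : Fin d =>
          (if (j : ℕ) = 0 then d * k - ∑ i ∈ Finset.range (d - 1), lam i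
            else lam ((j : ℕ) - 1)) + (d - 1 - (j : ℕ)))
        (vand d * charS d k d) = c := by
  obtain ⟨m, rfl⟩ : ∃ m, d = m + 1 := ⟨d - 1, by omega⟩
  choose Kf hKf using fun a => termF_stab lam m a
  refine ⟨(vand (m+1)).support.sup Kf,
    coeff (Evec lam m ((vand (m+1)).support.sup Kf))
      (vand (m+1) * charS (m+1) ((vand (m+1)).support.sup Kf) (m+1)), fun k hk => ?_⟩
  show coeff (Evec lam m k) (vand (m+1) * charS (m+1) k (m+1)) = _
  induction k, hk using Nat.le_induction with
  | base => rfl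
  | succ n hn ih =>
      calc coeff (Evec lam m (n+1)) (vand (m+1) * charS (m+1) (n+1) (m+1))
          = ∑ a ∈ (vand (m+1)).support, termF lam m a (n+1) := coeff_vand_mul lam m (n+1)
        _ = ∑ a ∈ (vand (m+1)).support, termF lam m a n :=
            Finset.sum_congr rfl fun a ha => hKf a n (le_trans (Finset.le_sup ha) hn)
        _ = coeff (Evec lam m n) (vand (m+1) * charS (m+1) n (m+1)) :=
            (coeff_vand_mul lam m n).symm
        _ = _ := ih
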